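/- Let m(z) = ∫ ρ(x)/(x−z) dx be the Stieltjes transform of the semicircle density ρ(x) = (1/(2π))√(max(4−x²,0)), defined for z ∉ [−2,2]. Then m satisfies the identity m(z) + 1/m(z) + z = 0. -/

import Mathlib

open MeasureTheory

/-- The semicircle density `ρ(x) = (1/(2π))√((4−x²)₊)`. -/
noncomputable def semicircle (x : ℝ) : ℝ := (2 * Real.pi)⁻¹ * Real.sqrt (max (4 - x ^ 2) 0)

/-- The Stieltjes transform `m(z) = ∫ ρ(x)/(x − z) dx` of the semicircle law. -/
noncomputable def stieltjes (z : ℂ) : ℂ := ∫ x : ℝ, (semicircle x : ℂ) / ((x : ℂ) - z)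

open Complex intervalIntegral Real



/-- If `‖w‖ = 1` then `w + w⁻¹` is real and lies in `[-2,2]`. -/
lemma unit_circle_image (w : ℂ) (hw : ‖w‖ = 1) :
    (w + w⁻¹).im = 0 ∧ (w + w⁻¹).re ∈ Set.Icc (-2:ℝ) 2 := by
  have hns : Complex.normSq w = 1 := by
    rw [Complex.normSq_eq_norm_sq, hw]; norm_num
  have hinv : w⁻¹ = starRingEnd ℂ w := by
    rw [Complex.inv_def, hns]; simp
  constructor
  · simp [hinv, Complex.add_im, Complex.conj_im]
  · have hre : |w.re| ≤ 1 := by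
      have := Complex.abs_re_le_norm w
      rw [hw] at this
      exact this
    have : (w + w⁻¹).re = 2 * w.re := by
      simp [hinv, Complex.add_re, Complex.conj_re]; ring
    rw [this]
    constructor <;> [nlinarith [abs_le.1 hre]; nlinarith [abs_le.1 hre]]

lemma exists_w (z : ℂ) (hz : ¬(z.im = 0 ∧ z.re ∈ Set.Icc (-2 : ℝ) 2)) :
    ∃ w : ℂ, 1 < ‖w‖ ∧ w + w⁻¹ = z := by
  have hd : z ^ 2 - 4 ≠ 0 := by
    intro h
    have h2 : (z - 2) * (z + 2) = 0 := by ring_nf; linear_combination h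
    rcases mul_eq_zero.1 h2 with h | h
    · apply hz; have : z = 2 := by linear_combination h
      simp [this]
    · apply hz; have : z = -2 := by linear_combination h
      constructor
      · simp [this]
      · simp [this]
  set s : ℂ := (z ^ 2 - 4) ^ ((2:ℂ)⁻¹) with hs_def
  have hs : s ^ 2 = z ^ 2 - 4 := by
    rw [sq, hs_def, ← Complex.cpow_add _ _ hd]
    norm_num
  have hprod : (z + s) / 2 * ((z - s) / 2) = 1 := by
    field_simp
    linear_combination -hs
  have hp0 : (z + s) / 2 ≠ 0 := by
    intro h; rw [h, zero_mul] at hprod; exact one_ne_zero hprod.symm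
  have hm0 : (z - s) / 2 ≠ 0 := by
    intro h; rw [h, mul_zero] at hprod; exact one_ne_zero hprod.symm
  have hinv : ((z + s) / 2)⁻¹ = (z - s) / 2 :=
    inv_eq_of_mul_eq_one_right hprod
  have hsum : (z + s) / 2 + ((z + s) / 2)⁻¹ = z := by
    rw [hinv]; ring
  have hnorm : ‖(z + s)/2‖ * ‖(z - s)/2‖ = 1 := by
    rw [← norm_mul, hprod, norm_one]
  have hne1 : ∀ u : ℂ, u + u⁻¹ = z → ‖u‖ ≠ 1 := by
    intro u hu h1
    exact hz (hu ▸ unit_circle_image u h1)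
  rcases lt_or_ge 1 ‖(z + s)/2‖ with h | h
  · exact ⟨(z + s)/2, h, hsum⟩
  · refine ⟨(z - s)/2, ?_, ?_⟩
    · have hp : ‖(z+s)/2‖ ≠ 1 := hne1 _ hsum
      have hppos : 0 < ‖(z+s)/2‖ := norm_pos_iff.2 hp0
      have : 1 < ‖(z - s)/2‖ := by
        rcases lt_of_le_of_ne h hp |>.lt_or_gt 1 with h' | h'
        · nlinarith
        · nlinarith
      exact this
    · have hinv2 : ((z - s)/2)⁻¹ = (z + s)/2 := by
        rw [← hinv, inv_inv]
      rw [hinv2]; ring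



variable {w : ℂ}

lemma hw0 (hw : 1 < ‖w‖) : w ≠ 0 := by
  intro h; rw [h, norm_zero] at hw; linarith

lemma hw2 (hw : 1 < ‖w‖) : w ^ 2 - 1 ≠ 0 := by
  intro h
  have : w ^ 2 = 1 := by linear_combination h
  have : ‖w‖ ^ 2 = 1 := by rw [← norm_pow, this, norm_one]
  nlinarith

lemma hE (hw : 1 < ‖w‖) (θ : ℝ) : w - Complex.exp (θ * I) ≠ 0 := by
  intro h
  have h2 : w = Complex.exp (θ * I) := by linear_combination h
  have : ‖w‖ = 1 := by rw [h2, Complex.norm_exp_ofReal_mul_I]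
  linarith

lemma hEn (hw : 1 < ‖w‖) (θ : ℝ) : w - (Complex.exp (θ * I))⁻¹ ≠ 0 := by
  have := hE hw (-θ)
  rw [← Complex.exp_neg]
  intro h; apply this
  rw [← h]; push_cast; ring_nf

/-- The partial-fraction identity for `(z - 2cos θ)⁻¹`. -/
lemma inv_den_eq (hw : 1 < ‖w‖) (θ : ℝ) :
    ((w + w⁻¹) - 2 * (Real.cos θ : ℂ))⁻¹
      = w / (w ^ 2 - 1) *
        ((1 - Complex.exp (θ * I) / w)⁻¹ + (1 - Complex.exp (-θ * I) / w)⁻¹ - 1) := by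
  have h0 := hw0 hw
  have h2 := hw2 hw
  have hE1 := hE hw θ
  have hE2 := hEn hw θ
  set E := Complex.exp (θ * I) with hEdef
  have hE0 : E ≠ 0 := Complex.exp_ne_zero _
  have hcos : (Real.cos θ : ℂ) = (E + E⁻¹) / 2 := by
    rw [Complex.ofReal_cos, Complex.cos, hEdef, ← Complex.exp_neg]
    push_cast; ring_nf
  have hexpneg : Complex.exp (-θ * I) = E⁻¹ := by
    rw [← Complex.exp_neg, neg_mul]
  rw [hcos, hexpneg]
  have hden : (w + w⁻¹) - 2 * ((E + E⁻¹) / 2) ≠ 0 := by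
    intro h
    apply hE1
    have hfact : (w - E) * (w - E⁻¹) = w * ((w + w⁻¹) - 2 * ((E + E⁻¹) / 2)) := by
      field_simp; ring
    rw [h, mul_zero] at hfact
    rcases mul_eq_zero.1 hfact with h' | h'
    · exact h'
    · exact absurd h' hE2
  have h1u : (1 : ℂ) - E / w ≠ 0 := by
    intro h; apply hE1
    have h' : E / w = 1 := by linear_combination -h
    rw [(div_eq_one_iff_eq h0).1 h', sub_self]
  have h1v : (1 : ℂ) - E⁻¹ / w ≠ 0 := by
    intro h; apply hE2
    have h' : E⁻¹ / w = 1 := by linear_combination -h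
    rw [(div_eq_one_iff_eq h0).1 h', sub_self]
  have hwE : w * E - 1 ≠ 0 := by
    intro h; apply hE2
    have h' : w * E = 1 := by linear_combination h
    rw [eq_inv_of_mul_eq_one_left h', sub_self]
  refine inv_eq_of_mul_eq_one_left ?_
  have e1 : ((1:ℂ) - E / w)⁻¹ = w / (w - E) := by
    rw [show (1:ℂ) - E / w = (w - E) / w by field_simp, inv_div]
  have e2 : ((1:ℂ) - E⁻¹ / w)⁻¹ = (w * E) / (w * E - 1) := by
    rw [show (1:ℂ) - E⁻¹ / w = (w * E - 1) / (w * E) by field_simp, inv_div]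
  rw [e1, e2]
  field_simp
  ring


noncomputable def hfun (w : ℂ) (n : ℕ) (θ : ℝ) : ℂ :=
  (Complex.exp (θ * I) / w) ^ n + (Complex.exp (-θ * I) / w) ^ n

lemma norm_ratio (w : ℂ) (hw : 1 < ‖w‖) (θ : ℝ) :
    ‖Complex.exp (θ * I) / w‖ = ‖w‖⁻¹ ∧ ‖Complex.exp (-θ * I) / w‖ = ‖w‖⁻¹ := by
  constructor
  · rw [norm_div, Complex.norm_exp_ofReal_mul_I]
    simp
  · have habs : ‖(Complex.exp (-(θ:ℂ) * I))‖ = 1 := by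
      rw [show (-(θ:ℂ)) * I = ((-θ : ℝ) : ℂ) * I by push_cast; ring]
      exact Complex.norm_exp_ofReal_mul_I _
    rw [norm_div, habs, one_div]

lemma hinv_lt (w : ℂ) (hw : 1 < ‖w‖) : ‖w‖⁻¹ < 1 :=
  inv_lt_one_of_one_lt₀ hw

/-- tsum of hfun. -/
lemma tsum_hfun (w : ℂ) (hw : 1 < ‖w‖) (θ : ℝ) :
    ∑' n : ℕ, hfun w n θ
      = (1 - Complex.exp (θ * I) / w)⁻¹ + (1 - Complex.exp (-θ * I) / w)⁻¹ := by
  obtain ⟨h1, h2⟩ := norm_ratio w hw θ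
  have r1 : ‖Complex.exp (θ * I) / w‖ < 1 := by rw [h1]; exact hinv_lt w hw
  have r2 : ‖Complex.exp (-θ * I) / w‖ < 1 := by rw [h2]; exact hinv_lt w hw
  unfold hfun
  rw [Summable.tsum_add (summable_geometric_of_norm_lt_one r1) (summable_geometric_of_norm_lt_one r2),
    tsum_geometric_of_norm_lt_one r1, tsum_geometric_of_norm_lt_one r2]

lemma cont_hfun (w : ℂ) (hw : 1 < ‖w‖) (n : ℕ) : Continuous (hfun w n) := by
  unfold hfun
  fun_prop

lemma integral_exp_c (c : ℂ) (hc : c ≠ 0) :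
    ∫ θ in (0:ℝ)..π, Complex.exp (c * θ) = (Complex.exp (c * π) - 1) / c := by
  rw [integral_exp_mul_complex hc]
  norm_num

lemma integral_hfun_succ (w : ℂ) (hw : 1 < ‖w‖) (m : ℕ) :
    ∫ θ in (0:ℝ)..π, hfun w (m + 1) θ = 0 := by
  have hw0 : w ≠ 0 := by intro h; rw [h, norm_zero] at hw; linarith
  set c : ℂ := ((m : ℂ) + 1) * I with hc_def
  have hc : c ≠ 0 := mul_ne_zero (Nat.cast_add_one_ne_zero m) I_ne_zero
  have heq : ∀ θ : ℝ, hfun w (m + 1) θ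
      = Complex.exp (c * θ) * ((w ^ (m+1))⁻¹) + Complex.exp (-c * θ) * ((w ^ (m+1))⁻¹) := by
    intro θ
    unfold hfun
    rw [div_pow, div_pow, ← Complex.exp_nat_mul, ← Complex.exp_nat_mul]
    rw [show ((m + 1 : ℕ) : ℂ) * (θ * I) = c * θ by push_cast [hc_def]; ring,
      show ((m + 1 : ℕ) : ℂ) * (-θ * I) = -c * θ by push_cast [hc_def]; ring]
    ring
  simp_rw [heq]
  rw [intervalIntegral.integral_add, intervalIntegral.integral_mul_const,
    intervalIntegral.integral_mul_const, integral_exp_c c hc, integral_exp_c (-c) (neg_ne_zero.2 hc)]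
  · have hA : Complex.exp (c * π) = (-1 : ℂ) ^ (m + 1) := by
      rw [show c * (π : ℂ) = ((m + 1 : ℕ) : ℂ) * (π * I) by push_cast [hc_def]; ring,
        Complex.exp_nat_mul, Complex.exp_pi_mul_I]
    have hB : Complex.exp (-c * π) = (-1 : ℂ) ^ (m + 1) := by
      rw [show -c * (π : ℂ) = ((m + 1 : ℕ) : ℂ) * (-(π * I)) by push_cast [hc_def]; ring,
        Complex.exp_nat_mul, Complex.exp_neg, Complex.exp_pi_mul_I]
      norm_num
    rw [hA, hB]
    field_simp
    ring
  · apply Continuous.intervalIntegrable; fun_prop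
  · apply Continuous.intervalIntegrable; fun_prop

lemma integral_hfun_zero : ∫ θ in (0:ℝ)..π, hfun w 0 θ = 2 * π := by
  unfold hfun
  simp [intervalIntegral.integral_const]
  push_cast
  ring

lemma integral_tsum_hfun (w : ℂ) (hw : 1 < ‖w‖) :
    ∫ θ in (0:ℝ)..π, (∑' n : ℕ, hfun w n θ) = 2 * π := by
  have hle : (0:ℝ) ≤ π := Real.pi_pos.le
  have hr1 : ‖w‖⁻¹ < 1 := hinv_lt w hw
  have hr0 : (0:ℝ) ≤ ‖w‖⁻¹ := inv_nonneg.2 (norm_nonneg w)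
  have hmeas : volume (Set.Ioc (0:ℝ) π) < ⊤ := by
    rw [Real.volume_Ioc]
    exact ENNReal.ofReal_lt_top
  have htoReal : (volume (Set.Ioc (0:ℝ) π)).toReal = π := by
    rw [Real.volume_Ioc, ENNReal.toReal_ofReal (by linarith)]
    simp
  rw [intervalIntegral.integral_of_le hle]
  have hint : ∀ n : ℕ, IntegrableOn (hfun w n) (Set.Ioc (0:ℝ) π) volume :=
    fun n => (cont_hfun w hw n).integrableOn_Ioc
  have hbound : ∀ n : ℕ, ∀ θ : ℝ, ‖hfun w n θ‖ ≤ 2 * (‖w‖⁻¹) ^ n := by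
    intro n θ
    obtain ⟨h1, h2⟩ := norm_ratio w hw θ
    calc ‖hfun w n θ‖ ≤ ‖(Complex.exp (θ * I) / w) ^ n‖ + ‖(Complex.exp (-θ * I) / w) ^ n‖ :=
          norm_add_le _ _
      _ = 2 * (‖w‖⁻¹) ^ n := by rw [norm_pow, norm_pow, h1, h2]; ring
  have hsum : Summable fun n : ℕ => ∫ θ in Set.Ioc (0:ℝ) π, ‖hfun w n θ‖ := by
    apply Summable.of_nonneg_of_le
      (fun n => integral_nonneg (fun θ => norm_nonneg _))
      (fun n => ?_)
      (((summable_geometric_of_lt_one hr0 hr1).mul_left 2).mul_right π)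
    have : ‖∫ θ in Set.Ioc (0:ℝ) π, ‖hfun w n θ‖‖ ≤ (2 * (‖w‖⁻¹) ^ n) * (volume (Set.Ioc (0:ℝ) π)).toReal := by
      apply norm_setIntegral_le_of_norm_le_const_ae hmeas
      filter_upwards with θ
      rw [Real.norm_eq_abs, _root_.abs_of_nonneg (norm_nonneg _)]
      exact hbound n θ
    rw [htoReal] at this
    calc ∫ θ in Set.Ioc (0:ℝ) π, ‖hfun w n θ‖
        ≤ ‖∫ θ in Set.Ioc (0:ℝ) π, ‖hfun w n θ‖‖ := le_abs_self _
      _ ≤ 2 * (‖w‖⁻¹) ^ n * π := this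
  rw [← MeasureTheory.integral_tsum_of_summable_integral_norm hint hsum]
  have hterm : ∀ n : ℕ, (∫ θ in Set.Ioc (0:ℝ) π, hfun w n θ) =
      if n = 0 then (2 * π : ℂ) else 0 := by
    intro n
    match n with
    | 0 =>
      rw [← intervalIntegral.integral_of_le hle, integral_hfun_zero]
      simp
    | m + 1 =>
      rw [← intervalIntegral.integral_of_le hle, integral_hfun_succ w hw m]
      simp
  simp_rw [hterm]
  rw [tsum_eq_single 0 (fun n hn => by simp [hn])]
  simp

lemma one_sub_ne (w : ℂ) (hw : 1 < ‖w‖) (θ : ℝ) :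
    (1 : ℂ) - Complex.exp (θ * I) / w ≠ 0 ∧ (1 : ℂ) - Complex.exp (-θ * I) / w ≠ 0 := by
  obtain ⟨h1, h2⟩ := norm_ratio w hw θ
  have hr : ‖w‖⁻¹ < 1 := hinv_lt w hw
  constructor
  · intro h
    have : Complex.exp (θ * I) / w = 1 := by linear_combination -h
    rw [this, norm_one] at h1; linarith
  · intro h
    have : Complex.exp (-θ * I) / w = 1 := by linear_combination -h
    rw [this, norm_one] at h2; linarith

lemma cont_F (w : ℂ) (hw : 1 < ‖w‖) :
    Continuous fun θ : ℝ =>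
      (1 - Complex.exp (θ * I) / w)⁻¹ + (1 - Complex.exp (-θ * I) / w)⁻¹ := by
  have c1 : Continuous fun θ : ℝ => (1 : ℂ) - Complex.exp (θ * I) / w := by fun_prop
  have c2 : Continuous fun θ : ℝ => (1 : ℂ) - Complex.exp (-θ * I) / w := by fun_prop
  exact (c1.inv₀ fun θ => (one_sub_ne w hw θ).1).add (c2.inv₀ fun θ => (one_sub_ne w hw θ).2)

lemma integral_F (w : ℂ) (hw : 1 < ‖w‖) :
    ∫ θ in (0:ℝ)..π,
      ((1 - Complex.exp (θ * I) / w)⁻¹ + (1 - Complex.exp (-θ * I) / w)⁻¹) = 2 * π := by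
  have : ∀ θ : ℝ, (1 - Complex.exp (θ * I) / w)⁻¹ + (1 - Complex.exp (-θ * I) / w)⁻¹
      = ∑' n : ℕ, hfun w n θ := fun θ => (tsum_hfun w hw θ).symm
  simp_rw [this]
  exact integral_tsum_hfun w hw

lemma integral_inv_den (w : ℂ) (hw : 1 < ‖w‖) :
    ∫ θ in (0:ℝ)..π, ((w + w⁻¹) - 2 * (Real.cos θ : ℂ))⁻¹ = π * w / (w ^ 2 - 1) := by
  have heq : ∀ θ : ℝ, ((w + w⁻¹) - 2 * (Real.cos θ : ℂ))⁻¹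
      = w / (w ^ 2 - 1) *
        (((1 - Complex.exp (θ * I) / w)⁻¹ + (1 - Complex.exp (-θ * I) / w)⁻¹) - 1) := by
    intro θ
    rw [inv_den_eq hw θ]
  simp_rw [heq]
  rw [intervalIntegral.integral_const_mul, intervalIntegral.integral_sub
    ((cont_F w hw).intervalIntegrable _ _) (intervalIntegrable_const),
    integral_F w hw, intervalIntegral.integral_const]
  have hw2' : w ^ 2 - 1 ≠ 0 := hw2 hw
  field_simp
  rw [Complex.real_smul]
  ring



section den
variable {w : ℂ}

lemma den_ne (hw : 1 < ‖w‖) (θ : ℝ) : (w + w⁻¹) - 2 * (Real.cos θ : ℂ) ≠ 0 := by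
  have h0 := hw0 hw
  have hE1 := hE hw θ
  have hE2 := hEn hw θ
  set E := Complex.exp (θ * I) with hEdef
  have hE0 : E ≠ 0 := Complex.exp_ne_zero _
  have hcos : (Real.cos θ : ℂ) = (E + E⁻¹) / 2 := by
    rw [Complex.ofReal_cos, Complex.cos, hEdef, ← Complex.exp_neg]
    push_cast; ring_nf
  rw [hcos]
  intro h
  have hfact : (w - E) * (w - E⁻¹) = w * ((w + w⁻¹) - 2 * ((E + E⁻¹) / 2)) := by
    field_simp; ring
  rw [h, mul_zero] at hfact
  rcases mul_eq_zero.1 hfact with h' | h'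
  · exact hE1 h'
  · exact hE2 h'

lemma cont_semicircle : Continuous semicircle := by
  unfold semicircle
  continuity

/-- Step A: restrict to `[-2,2]`. -/
lemma stieltjes_eq_interval (z : ℂ) :
    stieltjes z = ∫ x in (-2:ℝ)..2, (semicircle x : ℂ) / ((x : ℂ) - z) := by
  have hvan : ∀ x ∉ Set.Icc (-2:ℝ) 2, (semicircle x : ℂ) / ((x : ℂ) - z) = 0 := by
    intro x hx
    have h4 : (4 : ℝ) - x ^ 2 ≤ 0 := by
      simp only [Set.mem_Icc, not_and_or, not_le] at hx
      rcases hx with h | h <;> nlinarith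
    have : semicircle x = 0 := by
      unfold semicircle
      rw [max_eq_right h4, Real.sqrt_zero, mul_zero]
    rw [this]
    simp
  rw [stieltjes, ← setIntegral_eq_integral_of_forall_compl_eq_zero hvan,
    MeasureTheory.integral_Icc_eq_integral_Ioc, ← intervalIntegral.integral_of_le (by norm_num)]

/-- Step B: substitution `x = 2 cos θ`. -/
lemma stieltjes_eq_theta (w : ℂ) (hw : 1 < ‖w‖) :
    stieltjes (w + w⁻¹)
      = ∫ θ in (0:ℝ)..π, (2 * Real.sin θ) •
          ((semicircle (2 * Real.cos θ) : ℂ) / ((2 * Real.cos θ : ℝ) - (w + w⁻¹))) := by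
  set z := w + w⁻¹ with hz_def
  set g : ℝ → ℂ := fun x => (semicircle x : ℂ) / ((x : ℂ) - z) with hg_def
  have hderiv : ∀ θ ∈ Set.uIcc (0:ℝ) π, HasDerivAt (fun t => 2 * Real.cos t)
      ((fun t => -2 * Real.sin t) θ) θ := by
    intro θ _
    have := (Real.hasDerivAt_cos θ).const_mul 2
    simpa [mul_comm, neg_mul, mul_neg] using this
  have hcont' : ContinuousOn (fun t => -2 * Real.sin t) (Set.uIcc (0:ℝ) π) := by fun_prop
  have hgcont : ContinuousOn g ((fun t => 2 * Real.cos t) '' Set.uIcc (0:ℝ) π) := by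
    rintro x ⟨θ, _, rfl⟩
    apply ContinuousAt.continuousWithinAt
    apply ContinuousAt.div
    · exact (Complex.continuous_ofReal.comp cont_semicircle).continuousAt
    · exact (Complex.continuous_ofReal.sub continuous_const).continuousAt
    · have := den_ne hw θ
      intro h
      apply this
      push_cast at h ⊢
      linear_combination -h
  have hsub := intervalIntegral.integral_comp_smul_deriv' hderiv hcont' hgcont
  rw [stieltjes_eq_interval]
  have h20 : 2 * Real.cos 0 = 2 := by simp
  have h2pi : 2 * Real.cos π = -2 := by simp
  rw [h20, h2pi] at hsub
  have : ∫ x in (-2:ℝ)..2, g x = - ∫ x in (2:ℝ)..(-2), g x := by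
    rw [intervalIntegral.integral_symm]
  rw [this, ← hsub, ← intervalIntegral.integral_neg]
  apply intervalIntegral.integral_congr
  intro θ _
  show -((-2 * Real.sin θ) • g (2 * Real.cos θ)) = (2 * Real.sin θ) • (g (2 * Real.cos θ))
  rw [← neg_smul]
  norm_num
end den


section main
variable {w : ℂ}

lemma stieltjes_w (w : ℂ) (hw : 1 < ‖w‖) : stieltjes (w + w⁻¹) = -w⁻¹ := by
  have hπ : ((π : ℝ) : ℂ) ≠ 0 := by exact_mod_cast Real.pi_ne_zero
  have h0 := hw0 hw
  have h2 := hw2 hw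
  set z := w + w⁻¹ with hz_def
  rw [stieltjes_eq_theta w hw]
  have hcongr : Set.EqOn
      (fun θ : ℝ => (2 * Real.sin θ) •
          ((semicircle (2 * Real.cos θ) : ℂ) / ((2 * Real.cos θ : ℝ) - z)))
      (fun θ : ℝ => (-(((π:ℝ):ℂ))⁻¹) * (Real.cos θ : ℂ) + (-z / (2 * ((π:ℝ):ℂ)))
          + (-(2 / ((π:ℝ):ℂ)) * (1 - z ^ 2 / 4)) * ((z - 2 * (Real.cos θ : ℂ))⁻¹))
      (Set.uIcc 0 π) := by
    intro θ hθ
    rw [Set.uIcc_of_le Real.pi_pos.le] at hθ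
    have hsin : 0 ≤ Real.sin θ := Real.sin_nonneg_of_nonneg_of_le_pi hθ.1 hθ.2
    have hsemi : semicircle (2 * Real.cos θ) = Real.sin θ / π := by
      unfold semicircle
      have h4 : 4 - (2 * Real.cos θ) ^ 2 = (2 * Real.sin θ) ^ 2 := by
        nlinarith [Real.sin_sq_add_cos_sq θ]
      rw [h4, max_eq_left (by positivity), Real.sqrt_sq (by positivity)]
      field_simp
    show (2 * Real.sin θ) • ((semicircle (2 * Real.cos θ) : ℂ) / ((2 * Real.cos θ : ℝ) - z)) = _
    rw [hsemi]
    have hden := den_ne hw θ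
    rw [← hz_def] at hden
    have hSC : (Real.sin θ : ℂ) ^ 2 + (Real.cos θ : ℂ) ^ 2 = 1 := by
      exact_mod_cast Real.sin_sq_add_cos_sq θ
    rw [Complex.real_smul]
    simp only [Complex.ofReal_mul, Complex.ofReal_div, Complex.ofReal_ofNat]
    set S := (Real.sin θ : ℂ)
    set C := (Real.cos θ : ℂ)
    have hden' : (2 : ℂ) * C - z ≠ 0 := fun h => hden (by linear_combination -h)
    have hS2 : S ^ 2 = 1 - C ^ 2 := by linear_combination hSC
    have lhs_eq : 2 * S * (S / ((π:ℝ):ℂ) / (2 * C - z))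
        = (2 * (1 - C ^ 2) / ((π:ℝ):ℂ)) / (2 * C - z) := by
      rw [← hS2]; ring
    rw [lhs_eq]
    field_simp
    ring
  rw [intervalIntegral.integral_congr hcongr]
  have hcont_inv : Continuous fun θ : ℝ => (z - 2 * (Real.cos θ : ℂ))⁻¹ := by
    have hc : Continuous fun θ : ℝ => z - 2 * (Real.cos θ : ℂ) := by fun_prop
    exact hc.inv₀ fun θ => den_ne hw θ
  have hi1 : IntervalIntegrable (fun θ : ℝ => (-(((π:ℝ):ℂ))⁻¹) * (Real.cos θ : ℂ)) volume 0 π := by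
    apply Continuous.intervalIntegrable; fun_prop
  have hi2 : IntervalIntegrable (fun _ : ℝ => -z / (2 * ((π:ℝ):ℂ))) volume 0 π :=
    intervalIntegrable_const
  have hi3 : IntervalIntegrable
      (fun θ : ℝ => (-(2 / ((π:ℝ):ℂ)) * (1 - z ^ 2 / 4)) * ((z - 2 * (Real.cos θ : ℂ))⁻¹))
      volume 0 π := by
    apply Continuous.intervalIntegrable
    exact continuous_const.mul hcont_inv
  rw [intervalIntegral.integral_add (hi1.add hi2) hi3, intervalIntegral.integral_add hi1 hi2]
  rw [intervalIntegral.integral_const_mul, intervalIntegral.integral_const_mul]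
  have hcos0 : ∫ θ in (0:ℝ)..π, (Real.cos θ : ℂ) = 0 := by
    rw [intervalIntegral.integral_ofReal, integral_cos]
    simp
  have hIden : ∫ θ in (0:ℝ)..π, (z - 2 * (Real.cos θ : ℂ))⁻¹ = ((π:ℝ):ℂ) * w / (w ^ 2 - 1) :=
    integral_inv_den w hw
  rw [hcos0, hIden, intervalIntegral.integral_const]
  rw [hz_def]
  simp only [sub_zero, Complex.real_smul]
  push_cast
  field_simp
  have haux : (-(((π:ℝ):ℂ) * w ^ 2 * 4) + ((π:ℝ):ℂ) * w ^ 4 * 4) ≠ 0 := by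
    have he : (-(((π:ℝ):ℂ) * w ^ 2 * 4) + ((π:ℝ):ℂ) * w ^ 4 * 4)
        = 4 * ((π:ℝ):ℂ) * w ^ 2 * (w ^ 2 - 1) := by ring
    rw [he]
    exact mul_ne_zero (mul_ne_zero (mul_ne_zero (by norm_num) hπ) (pow_ne_zero 2 h0)) h2
  have ht := mul_inv_cancel₀ haux
  linear_combination (0:ℂ) * ht

end main

/-- For `z ∉ [−2,2]`, the semicircle Stieltjes transform satisfies `m(z) + 1/m(z) + z = 0`. -/
theorem stieltjes_self_consistent (z : ℂ)
    (hz : ¬(z.im = 0 ∧ z.re ∈ Set.Icc (-2 : ℝ) 2)) :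
    stieltjes z + (stieltjes z)⁻¹ + z = 0 := by
  obtain ⟨w, hw, hwz⟩ := exists_w z hz
  have h0 : w ≠ 0 := hw0 hw
  have hm : stieltjes z = -w⁻¹ := by rw [← hwz]; exact stieltjes_w w hw
  rw [hm, ← hwz]
  rw [inv_neg, inv_inv]
  ring
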